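/- (Hildebrandt) If λ is a corner point of the boundary of the numerical range W(A) of a bounded linear operator A (whether or not λ ∈ W(A)), then λ lies in the approximate point spectrum of A. -/

import Mathlib

open Filter Topology

open scoped ComplexInnerProductSpace in
/-- The numerical range `W(A) = {⟨Af, f⟩ : ‖f‖ = 1}`. -/
def numericalRange {H : Type*} [NormedAddCommGroup H] [InnerProductSpace ℂ H]
    (A : H →L[ℂ] H) : Set ℂ :=
  {z | ∃ f : H, ‖f‖ = 1 ∧ ⟪f, A f⟫ = z}

/-- The approximate point spectrum. -/
def approxPointSpectrum {H : Type*} [NormedAddCommGroup H] [InnerProductSpace ℂ H]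
    (A : H →L[ℂ] H) : Set ℂ :=
  {lam | ∃ u : ℕ → H, (∀ n, ‖u n‖ = 1) ∧
    Tendsto (fun n => ‖A (u n) - lam • u n‖) atTop (𝓝 0)}

/-- `lam` is a corner point of `S`: `S` is contained in a sector with vertex `lam`
and opening angle `α < π`. -/
def IsCornerPoint (S : Set ℂ) (lam : ℂ) : Prop :=
  ∃ θ α : ℝ, α < Real.pi ∧
    ∀ z ∈ S, ∃ r φ : ℝ, 0 ≤ r ∧ θ ≤ φ ∧ φ ≤ θ + α ∧
      z = lam + r * Complex.exp (φ * Complex.I)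

open scoped ComplexInnerProductSpace


lemma sym_cs {H : Type*} [NormedAddCommGroup H] [InnerProductSpace ℂ H]
    (P : H →L[ℂ] H) (hsym : ∀ x y : H, ⟪y, P x⟫ = starRingEnd ℂ ⟪x, P y⟫)
    (hpos : ∀ x : H, 0 ≤ (⟪x, P x⟫ : ℂ).re) (x y : H) :
    ‖(⟪x, P y⟫ : ℂ)‖ ^ 2 ≤ (⟪x, P x⟫ : ℂ).re * (⟪y, P y⟫ : ℂ).re := by
  set c : ℂ := ⟪x, P y⟫ with hc
  rcases eq_or_ne c 0 with h0 | h0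
  · rw [h0]; simpa using mul_nonneg (hpos x) (hpos y)
  have hnc : (0:ℝ) < ‖c‖ := norm_pos_iff.mpr h0
  have hcc : starRingEnd ℂ c * c = ((‖c‖ ^ 2 : ℝ) : ℂ) := by
    rw [← Complex.normSq_eq_conj_mul_self, Complex.normSq_eq_norm_sq]
  have hne : ((‖c‖ : ℝ) : ℂ) ≠ 0 := by exact_mod_cast hnc.ne'
  have hne' : ((‖c‖ : ℝ) : ℂ) ≠ 0 := hne
  have expand : ∀ t : ℂ,
      (⟪x + t • y, P (x + t • y)⟫ : ℂ)
        = ⟪x, P x⟫ + t * c + (starRingEnd ℂ t) * (starRingEnd ℂ c)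
          + (t * starRingEnd ℂ t) * ⟪y, P y⟫ := by
    intro t
    rw [map_add, map_smul, inner_add_left, inner_add_right, inner_add_right,
      inner_smul_left, inner_smul_right, inner_smul_left, inner_smul_right,
      hsym x y, ← hc]
    ring
  have key : ∀ s : ℝ, 0 ≤ (⟪y, P y⟫ : ℂ).re * (s * s) + (-(2 * ‖c‖)) * s
      + (⟪x, P x⟫ : ℂ).re := by
    intro s
    have h := hpos (x + ((-(s:ℂ)) * (starRingEnd ℂ c / ‖c‖)) • y)
    rw [expand] at h
    set t : ℂ := (-(s:ℂ)) * (starRingEnd ℂ c / ‖c‖) with ht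
    have htc : t * c = ((-(s * ‖c‖) : ℝ) : ℂ) := by
      have e : t * c = (-(s:ℂ)) * ((starRingEnd ℂ c * c) / (‖c‖:ℂ)) := by rw [ht]; ring
      rw [e, hcc]
      push_cast
      field_simp [hne']
    have h3 : starRingEnd ℂ t * starRingEnd ℂ c = ((-(s * ‖c‖) : ℝ) : ℂ) := by
      rw [← map_mul, htc, Complex.conj_ofReal]
    have hct : starRingEnd ℂ t = (-(s:ℂ)) * (c / ‖c‖) := by
      rw [ht]; simp [map_mul, map_div₀, Complex.conj_ofReal]
    have htt : t * starRingEnd ℂ t = ((s * s : ℝ) : ℂ) := by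
      rw [ht, hct]
      have e : -(s:ℂ) * (starRingEnd ℂ c / ‖c‖) * (-(s:ℂ) * (c / ‖c‖))
          = ((s:ℂ) * s) * ((starRingEnd ℂ c * c) / ((‖c‖:ℂ) * ‖c‖)) := by ring
      rw [e, hcc]
      push_cast
      field_simp [hne']
    rw [htc, h3, htt] at h
    simp only [Complex.add_re, Complex.ofReal_re, Complex.re_ofReal_mul] at h
    linarith
  have hd := discrim_le_zero key
  rw [discrim] at hd
  nlinarith [hpos x, hpos y, sq_nonneg ‖c‖]

lemma sym_norm_sq_le {H : Type*} [NormedAddCommGroup H] [InnerProductSpace ℂ H]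
    (P : H →L[ℂ] H) (hsym : ∀ x y : H, ⟪y, P x⟫ = starRingEnd ℂ ⟪x, P y⟫)
    (hpos : ∀ x : H, 0 ≤ (⟪x, P x⟫ : ℂ).re) (x : H) :
    ‖P x‖ ^ 2 ≤ ‖P‖ * (⟪x, P x⟫ : ℂ).re := by
  rcases eq_or_ne (P x) 0 with hz | hz
  · rw [hz]
    simpa using mul_nonneg (norm_nonneg P) (hpos x)
  have h := sym_cs P hsym hpos (P x) x
  have h1 : ‖(⟪P x, P x⟫ : ℂ)‖ = ‖P x‖ ^ 2 := by
    rw [inner_self_eq_norm_sq_to_K, norm_pow]; norm_num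
  have h2 : (⟪P x, P (P x)⟫ : ℂ).re ≤ ‖P‖ * ‖P x‖ ^ 2 := by
    calc (⟪P x, P (P x)⟫ : ℂ).re ≤ ‖(⟪P x, P (P x)⟫ : ℂ)‖ := Complex.re_le_norm _
      _ ≤ ‖P x‖ * ‖P (P x)‖ := norm_inner_le_norm _ _
      _ ≤ ‖P x‖ * (‖P‖ * ‖P x‖) := by
          exact mul_le_mul_of_nonneg_left (P.le_opNorm _) (norm_nonneg _)
      _ = ‖P‖ * ‖P x‖ ^ 2 := by ring
  rw [h1] at h
  have hnz : (0:ℝ) < ‖P x‖ := norm_pos_iff.mpr hz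
  have h4 := mul_le_mul_of_nonneg_right h2 (hpos x)
  nlinarith [h4, pow_pos hnz 2]


/-- Hildebrandt: a corner point of `∂W(A)` lies in the approximate
point spectrum of `A`. -/
theorem corner_point_mem_approxPointSpectrum {H : Type*} [NormedAddCommGroup H]
    [InnerProductSpace ℂ H] [CompleteSpace H] (A : H →L[ℂ] H) (lam : ℂ)
    (hb : lam ∈ frontier (numericalRange A))
    (hc : IsCornerPoint (numericalRange A) lam) :
    lam ∈ approxPointSpectrum A := by
  obtain ⟨θ, α, hαπ, hsec⟩ := hc
  have hcl : lam ∈ closure (numericalRange A) :=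
    frontier_subset_closure hb
  obtain ⟨z, hzmem, hztend⟩ := mem_closure_iff_seq_limit.mp hcl
  -- α is nonnegative
  have hα0 : 0 ≤ α := by
    obtain ⟨r0, φ0, _, h1, h2, _⟩ := hsec (z 0) (hzmem 0)
    linarith
  have hα2 : α / 2 < Real.pi / 2 := by linarith
  set β : ℝ := θ + α / 2 with hβ
  set k : ℝ := Real.tan (α / 2) with hkdef
  have hk0 : 0 ≤ k := Real.tan_nonneg_of_nonneg_of_le_pi_div_two (by linarith) (by linarith)
  set e : ℂ := Complex.exp (-(β:ℂ) * Complex.I) with he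
  set T : H →L[ℂ] H := e • (A - lam • (1 : H →L[ℂ] H)) with hT
  have hTapp : ∀ v : H, T v = e • (A v - lam • v) := by
    intro v
    simp [hT, ContinuousLinearMap.smul_apply, ContinuousLinearMap.sub_apply]
  have hinner : ∀ v : H, ‖v‖ = 1 → (⟪v, T v⟫ : ℂ) = e * ((⟪v, A v⟫ : ℂ) - lam) := by
    intro v hv
    rw [hTapp, inner_smul_right, inner_sub_right, inner_smul_right,
      inner_self_eq_norm_sq_to_K, hv]
    push_cast
    ring
  -- the sector bound for unit vectors
  have hunit : ∀ v : H, ‖v‖ = 1 →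
      0 ≤ (⟪v, T v⟫ : ℂ).re ∧ |(⟪v, T v⟫ : ℂ).im| ≤ k * (⟪v, T v⟫ : ℂ).re := by
    intro v hv
    obtain ⟨r, φ, hr, hφ1, hφ2, heq⟩ := hsec (⟪v, A v⟫ : ℂ) ⟨v, hv, rfl⟩
    have hval : (⟪v, T v⟫ : ℂ) = (r : ℂ) * Complex.exp (((φ - β : ℝ) : ℂ) * Complex.I) := by
      rw [hinner v hv, heq, he]
      rw [show ((φ - β : ℝ) : ℂ) * Complex.I = -(β:ℂ) * Complex.I + (φ:ℝ) * Complex.I by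
        push_cast; ring, Complex.exp_add]
      ring
    have hre : (⟪v, T v⟫ : ℂ).re = r * Real.cos (φ - β) := by
      rw [hval, Complex.re_ofReal_mul, Complex.exp_ofReal_mul_I_re]
    have him : (⟪v, T v⟫ : ℂ).im = r * Real.sin (φ - β) := by
      rw [hval, Complex.im_ofReal_mul, Complex.exp_ofReal_mul_I_im]
    set ψ : ℝ := φ - β with hψ
    have hψ1 : -(α/2) ≤ ψ := by rw [hψ, hβ]; linarith
    have hψ2 : ψ ≤ α/2 := by rw [hψ, hβ]; linarith
    have hπ : (0:ℝ) < Real.pi := Real.pi_pos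
    have hcos : 0 ≤ Real.cos ψ :=
      Real.cos_nonneg_of_mem_Icc ⟨by linarith, by linarith⟩
    have habs : |ψ| ≤ α/2 := abs_le.mpr ⟨hψ1, hψ2⟩
    have hcosa : 0 < Real.cos |ψ| := by
      apply Real.cos_pos_of_mem_Ioo
      constructor
      · have : (0:ℝ) ≤ |ψ| := abs_nonneg _
        linarith
      · have : |ψ| ≤ α/2 := abs_le.mpr ⟨hψ1, hψ2⟩
        linarith
    have htan : Real.tan |ψ| ≤ k := by
      rw [hkdef]
      apply Real.strictMonoOn_tan.monotoneOn
      · exact Set.mem_Ioo.mpr ⟨by have := abs_nonneg ψ; linarith, lt_of_le_of_lt habs hα2⟩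
      · exact Set.mem_Ioo.mpr ⟨by linarith, hα2⟩
      · exact habs
    have hsin : |Real.sin ψ| ≤ k * Real.cos ψ := by
      have h1 : |Real.sin ψ| = Real.sin |ψ| := by
        rcases abs_cases ψ with ⟨h, h'⟩ | ⟨h, h'⟩
        · rw [h, abs_of_nonneg (Real.sin_nonneg_of_nonneg_of_le_pi h' (by linarith))]
        · rw [h, Real.sin_neg,
            abs_of_nonpos (Real.sin_nonpos_of_nonpos_of_neg_pi_le (le_of_lt h') (by linarith))]
      have h3 : Real.sin |ψ| / Real.cos |ψ| ≤ k := by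
        rw [← Real.tan_eq_sin_div_cos]; exact htan
      have h4 : Real.sin |ψ| ≤ k * Real.cos |ψ| := (div_le_iff₀ hcosa).mp h3
      rw [h1, ← Real.cos_abs ψ]
      exact h4
    constructor
    · rw [hre]; exact mul_nonneg hr hcos
    · rw [him, hre, abs_mul, abs_of_nonneg hr]
      nlinarith [mul_le_mul_of_nonneg_left hsin hr]
  -- the sector bound for all vectors by homogeneity
  have hsector : ∀ v : H,
      0 ≤ (⟪v, T v⟫ : ℂ).re ∧ |(⟪v, T v⟫ : ℂ).im| ≤ k * (⟪v, T v⟫ : ℂ).re := by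
    intro v
    rcases eq_or_ne v 0 with rfl | hv0
    · simp
    have hnv : (0:ℝ) < ‖v‖ := norm_pos_iff.mpr hv0
    have hnvc : ((‖v‖ : ℝ) : ℂ) ≠ 0 := by exact_mod_cast hnv.ne'
    set u : H := ((‖v‖ : ℝ) : ℂ)⁻¹ • v with hu
    have hu1 : ‖u‖ = 1 := by
      rw [hu, norm_smul, norm_inv, Complex.norm_real, norm_norm]
      field_simp
    have hveq : v = ((‖v‖ : ℝ) : ℂ) • u := by
      rw [hu, smul_smul, mul_inv_cancel₀ hnvc, one_smul]
    have hscale : (⟪v, T v⟫ : ℂ) = ((‖v‖^2 : ℝ) : ℂ) * ⟪u, T u⟫ := by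
      nth_rewrite 1 [hveq]
      nth_rewrite 2 [hveq]
      rw [map_smul, inner_smul_left, inner_smul_right, Complex.conj_ofReal]
      push_cast
      ring
    obtain ⟨h1, h2⟩ := hunit u hu1
    have hre : (⟪v, T v⟫ : ℂ).re = ‖v‖^2 * (⟪u, T u⟫ : ℂ).re := by
      rw [hscale, Complex.re_ofReal_mul]
    have him : (⟪v, T v⟫ : ℂ).im = ‖v‖^2 * (⟪u, T u⟫ : ℂ).im := by
      rw [hscale, Complex.im_ofReal_mul]
    constructor
    · rw [hre]; exact mul_nonneg (sq_nonneg _) h1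
    · rw [hre, him, abs_mul, abs_of_nonneg (sq_nonneg ‖v‖)]
      nlinarith [mul_le_mul_of_nonneg_left h2 (sq_nonneg ‖v‖)]
  -- split T = B + i C
  set S : H →L[ℂ] H := ContinuousLinearMap.adjoint T with hS
  set B : H →L[ℂ] H := (2:ℂ)⁻¹ • (T + S) with hBdef
  set C : H →L[ℂ] H := (-(Complex.I)/2) • (T - S) with hCdef
  have hBinner : ∀ x y : H, (⟪x, B y⟫ : ℂ) = (2:ℂ)⁻¹ * ((⟪x, T y⟫ : ℂ) + ⟪T x, y⟫) := by
    intro x y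
    simp only [hBdef, ContinuousLinearMap.smul_apply, ContinuousLinearMap.add_apply,
      inner_smul_right, inner_add_right, hS, ContinuousLinearMap.adjoint_inner_right]
  have hCinner : ∀ x y : H, (⟪x, C y⟫ : ℂ)
      = (-(Complex.I)/2) * ((⟪x, T y⟫ : ℂ) - ⟪T x, y⟫) := by
    intro x y
    simp only [hCdef, ContinuousLinearMap.smul_apply, ContinuousLinearMap.sub_apply,
      inner_smul_right, inner_sub_right, hS, ContinuousLinearMap.adjoint_inner_right]
  have symB : ∀ x y : H, (⟪y, B x⟫ : ℂ) = starRingEnd ℂ ⟪x, B y⟫ := by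
    intro x y
    rw [hBinner, hBinner, map_mul, map_add, inner_conj_symm, inner_conj_symm]
    rw [show starRingEnd ℂ (2:ℂ)⁻¹ = (2:ℂ)⁻¹ by rw [map_inv₀, Complex.conj_ofNat]]
    ring
  have symC : ∀ x y : H, (⟪y, C x⟫ : ℂ) = starRingEnd ℂ ⟪x, C y⟫ := by
    intro x y
    rw [hCinner, hCinner, map_mul, map_sub, inner_conj_symm, inner_conj_symm]
    rw [show starRingEnd ℂ (-(Complex.I)/2) = Complex.I/2 by
      simp [map_div₀, Complex.conj_I, Complex.conj_ofNat]]
    ring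
  have hBx : ∀ x : H, (⟪x, B x⟫ : ℂ) = (((⟪x, T x⟫ : ℂ).re : ℝ) : ℂ) := by
    intro x
    rw [hBinner, show (⟪T x, x⟫ : ℂ) = starRingEnd ℂ ⟪x, T x⟫ from (inner_conj_symm _ _).symm,
      Complex.add_conj]
    push_cast
    ring
  have hCx : ∀ x : H, (⟪x, C x⟫ : ℂ) = (((⟪x, T x⟫ : ℂ).im : ℝ) : ℂ) := by
    intro x
    rw [hCinner, show (⟪T x, x⟫ : ℂ) = starRingEnd ℂ ⟪x, T x⟫ from (inner_conj_symm _ _).symm,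
      Complex.sub_conj]
    push_cast
    linear_combination (-(((⟪x, T x⟫ : ℂ).im : ℂ))) * Complex.I_mul_I
  -- the two positive operators k•B ± C
  set Pp : H →L[ℂ] H := (k:ℂ) • B + C with hPpdef
  set Pm : H →L[ℂ] H := (k:ℂ) • B - C with hPmdef
  have hPpx : ∀ x : H, (⟪x, Pp x⟫ : ℂ)
      = ((k * (⟪x, T x⟫ : ℂ).re + (⟪x, T x⟫ : ℂ).im : ℝ) : ℂ) := by
    intro x
    rw [hPpdef]
    simp only [ContinuousLinearMap.add_apply, ContinuousLinearMap.smul_apply,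
      inner_add_right, inner_smul_right, hBx, hCx]
    push_cast
    ring
  have hPmx : ∀ x : H, (⟪x, Pm x⟫ : ℂ)
      = ((k * (⟪x, T x⟫ : ℂ).re - (⟪x, T x⟫ : ℂ).im : ℝ) : ℂ) := by
    intro x
    rw [hPmdef]
    simp only [ContinuousLinearMap.sub_apply, ContinuousLinearMap.smul_apply,
      inner_sub_right, inner_smul_right, hBx, hCx]
    push_cast
    ring
  have symPp : ∀ x y : H, (⟪y, Pp x⟫ : ℂ) = starRingEnd ℂ ⟪x, Pp y⟫ := by
    intro x y
    rw [hPpdef]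
    simp only [ContinuousLinearMap.add_apply, ContinuousLinearMap.smul_apply,
      inner_add_right, inner_smul_right, symB x y, symC x y, map_add, map_mul,
      Complex.conj_ofReal]
  have symPm : ∀ x y : H, (⟪y, Pm x⟫ : ℂ) = starRingEnd ℂ ⟪x, Pm y⟫ := by
    intro x y
    rw [hPmdef]
    simp only [ContinuousLinearMap.sub_apply, ContinuousLinearMap.smul_apply,
      inner_sub_right, inner_smul_right, symB x y, symC x y, map_sub, map_mul,
      Complex.conj_ofReal]
  have posB : ∀ x : H, 0 ≤ (⟪x, B x⟫ : ℂ).re := by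
    intro x; rw [hBx]; simp [(hsector x).1]
  have posPp : ∀ x : H, 0 ≤ (⟪x, Pp x⟫ : ℂ).re := by
    intro x
    rw [hPpx]
    simp only [Complex.ofReal_re]
    have := (hsector x).2
    have h := abs_le.mp this
    linarith [h.1]
  have posPm : ∀ x : H, 0 ≤ (⟪x, Pm x⟫ : ℂ).re := by
    intro x
    rw [hPmx]
    simp only [Complex.ofReal_re]
    have h := abs_le.mp (hsector x).2
    linarith [h.2]
  -- pointwise decompositions
  have hIc : Complex.I * (-(Complex.I)/2) = (2:ℂ)⁻¹ := by
    linear_combination (-(1:ℂ)/2) * Complex.I_mul_I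
  have hTv : ∀ v : H, T v = B v + Complex.I • C v := by
    intro v
    rw [hBdef, hCdef]
    simp only [ContinuousLinearMap.smul_apply, ContinuousLinearMap.add_apply,
      ContinuousLinearMap.sub_apply, smul_smul, hIc]
    module
  have hCv : ∀ v : H, C v = (2:ℂ)⁻¹ • (Pp v - Pm v) := by
    intro v
    rw [hPpdef, hPmdef]
    simp only [ContinuousLinearMap.add_apply, ContinuousLinearMap.sub_apply,
      ContinuousLinearMap.smul_apply]
    module
  -- the sequence
  choose f hf1 hf2 using hzmem
  have hTfn : Tendsto (fun n => (⟪f n, T (f n)⟫ : ℂ)) atTop (𝓝 0) := by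
    have : ∀ n, (⟪f n, T (f n)⟫ : ℂ) = e * (z n - lam) := by
      intro n
      rw [hinner (f n) (hf1 n), hf2 n]
    rw [show (0:ℂ) = e * (lam - lam) by ring]
    exact (tendsto_congr this).mpr ((hztend.sub_const lam).const_mul e)
  have hbn : Tendsto (fun n => (⟪f n, T (f n)⟫ : ℂ).re) atTop (𝓝 0) := by
    have := (Complex.continuous_re.tendsto 0).comp hTfn
    simpa [Function.comp_def] using this
  have hcn : Tendsto (fun n => (⟪f n, T (f n)⟫ : ℂ).im) atTop (𝓝 0) := by
    have := (Complex.continuous_im.tendsto 0).comp hTfn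
    simpa [Function.comp_def] using this
  -- norm bounds
  have hnormB : ∀ n, ‖B (f n)‖ ≤ Real.sqrt (‖B‖ * (⟪f n, T (f n)⟫ : ℂ).re) := by
    intro n
    have h := sym_norm_sq_le B symB posB (f n)
    rw [hBx] at h
    simp only [Complex.ofReal_re] at h
    calc ‖B (f n)‖ = Real.sqrt (‖B (f n)‖ ^ 2) := (Real.sqrt_sq (norm_nonneg _)).symm
      _ ≤ _ := Real.sqrt_le_sqrt h
  have hnormPp : ∀ n, ‖Pp (f n)‖
      ≤ Real.sqrt (‖Pp‖ * (k * (⟪f n, T (f n)⟫ : ℂ).re + (⟪f n, T (f n)⟫ : ℂ).im)) := by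
    intro n
    have h := sym_norm_sq_le Pp symPp posPp (f n)
    rw [hPpx] at h
    simp only [Complex.ofReal_re] at h
    calc ‖Pp (f n)‖ = Real.sqrt (‖Pp (f n)‖ ^ 2) := (Real.sqrt_sq (norm_nonneg _)).symm
      _ ≤ _ := Real.sqrt_le_sqrt h
  have hnormPm : ∀ n, ‖Pm (f n)‖
      ≤ Real.sqrt (‖Pm‖ * (k * (⟪f n, T (f n)⟫ : ℂ).re - (⟪f n, T (f n)⟫ : ℂ).im)) := by
    intro n
    have h := sym_norm_sq_le Pm symPm posPm (f n)
    rw [hPmx] at h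
    simp only [Complex.ofReal_re] at h
    calc ‖Pm (f n)‖ = Real.sqrt (‖Pm (f n)‖ ^ 2) := (Real.sqrt_sq (norm_nonneg _)).symm
      _ ≤ _ := Real.sqrt_le_sqrt h
  set g : ℕ → ℝ := fun n =>
    Real.sqrt (‖B‖ * (⟪f n, T (f n)⟫ : ℂ).re)
      + (2:ℝ)⁻¹ * (Real.sqrt (‖Pp‖ * (k * (⟪f n, T (f n)⟫ : ℂ).re + (⟪f n, T (f n)⟫ : ℂ).im))
        + Real.sqrt (‖Pm‖ * (k * (⟪f n, T (f n)⟫ : ℂ).re - (⟪f n, T (f n)⟫ : ℂ).im))) with hg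
  have hbound : ∀ n, ‖T (f n)‖ ≤ g n := by
    intro n
    have h1 : ‖T (f n)‖ ≤ ‖B (f n)‖ + ‖C (f n)‖ := by
      rw [hTv]
      calc ‖B (f n) + Complex.I • C (f n)‖ ≤ ‖B (f n)‖ + ‖Complex.I • C (f n)‖ :=
            norm_add_le _ _
        _ = ‖B (f n)‖ + ‖C (f n)‖ := by rw [norm_smul, Complex.norm_I, one_mul]
    have h2 : ‖C (f n)‖ ≤ (2:ℝ)⁻¹ * (‖Pp (f n)‖ + ‖Pm (f n)‖) := by
      rw [hCv]
      rw [norm_smul]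
      have : ‖((2:ℂ)⁻¹)‖ = (2:ℝ)⁻¹ := by norm_num
      rw [this]
      have := norm_sub_le (Pp (f n)) (Pm (f n))
      nlinarith [norm_nonneg (Pp (f n) - Pm (f n))]
    have h3 := hnormB n
    have h4 := hnormPp n
    have h5 := hnormPm n
    rw [hg]
    simp only
    nlinarith [h1, h2, h3, h4, h5]
  have hgz : Tendsto g atTop (𝓝 0) := by
    rw [hg]
    have s1 : Tendsto (fun n => ‖B‖ * (⟪f n, T (f n)⟫ : ℂ).re) atTop (𝓝 0) := by
      simpa using hbn.const_mul ‖B‖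
    have s2 : Tendsto (fun n => ‖Pp‖ * (k * (⟪f n, T (f n)⟫ : ℂ).re
        + (⟪f n, T (f n)⟫ : ℂ).im)) atTop (𝓝 0) := by
      have := (hbn.const_mul k).add hcn
      simpa using (this.const_mul ‖Pp‖)
    have s3 : Tendsto (fun n => ‖Pm‖ * (k * (⟪f n, T (f n)⟫ : ℂ).re
        - (⟪f n, T (f n)⟫ : ℂ).im)) atTop (𝓝 0) := by
      have := (hbn.const_mul k).sub hcn
      simpa using (this.const_mul ‖Pm‖)
    have q1 := (Real.continuous_sqrt.tendsto 0).comp s1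
    have q2 := (Real.continuous_sqrt.tendsto 0).comp s2
    have q3 := (Real.continuous_sqrt.tendsto 0).comp s3
    rw [Real.sqrt_zero] at q1 q2 q3
    have := q1.add (((q2.add q3).const_mul (2:ℝ)⁻¹))
    simpa using this
  have hTn : Tendsto (fun n => ‖T (f n)‖) atTop (𝓝 0) :=
    squeeze_zero (fun n => norm_nonneg _) hbound hgz
  refine ⟨f, hf1, ?_⟩
  have hnorme : ‖e‖ = 1 := by
    rw [he, Complex.norm_exp]
    simp
  have heqn : ∀ n, ‖T (f n)‖ = ‖A (f n) - lam • f n‖ := by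
    intro n
    rw [hTapp, norm_smul, hnorme, one_mul]
  simpa only [heqn] using hTn
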